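/- Let x̄* ∈ Δ_n be the unique security strategy for payoff matrix G ∈ ℝ^{n×m} with value V, and let g ∈ ℝ^n be a new column with gᵀx̄* < V. Then every security strategy x̄⁺ for G_new = [G g] satisfies gᵀx̄⁺ = V_new, where V_new is the value of the new game. -/

import Mathlib

open Matrix

lemma aux_inf_split {m : ℕ} (hm : 0 < m) (f : Fin (m + 1) → ℝ) :
    (⨅ j, f j) = min (⨅ j : Fin m, f j.castSucc) (f (Fin.last m)) := by
  haveI : Nonempty (Fin m) := Fin.pos_iff_nonempty.mp hm
  apply le_antisymm
  · apply le_min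
    · exact le_ciInf fun j => ciInf_le (Set.Finite.bddBelow (Set.finite_range f)) _
    · exact ciInf_le (Set.Finite.bddBelow (Set.finite_range f)) _
  · apply le_ciInf
    intro j
    induction j using Fin.lastCases with
    | last => exact min_le_right _ _
    | cast j =>
      exact le_trans (min_le_left _ _)
        (ciInf_le (Set.Finite.bddBelow (Set.finite_range _)) j)

theorem stmt_15 {n m : ℕ} (hn : 0 < n) (hm : 0 < m)
    (G : Matrix (Fin n) (Fin m) ℝ) (g : Fin n → ℝ)
    (Gnew : Matrix (Fin n) (Fin (m + 1)) ℝ)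
    (hGnew : ∀ i, (∀ j : Fin m, Gnew i j.castSucc = G i j) ∧ Gnew i (Fin.last m) = g i)
    (xstar : Fin n → ℝ) (hxstar : xstar ∈ stdSimplex ℝ (Fin n))
    (V : ℝ) (hV : V = ⨅ j : Fin m, ∑ i, xstar i * G i j)
    (huniq : ∀ x ∈ stdSimplex ℝ (Fin n), x ≠ xstar →
      (⨅ j : Fin m, ∑ i, x i * G i j) < V)
    (hcut : ∑ i, xstar i * g i < V)
    (Vnew : ℝ)
    (hVnew : Vnew = ⨆ x : stdSimplex ℝ (Fin n),
      ⨅ j : Fin (m + 1), ∑ i, (x : Fin n → ℝ) i * Gnew i j) :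
    ∀ xplus ∈ stdSimplex ℝ (Fin n),
      (∀ x ∈ stdSimplex ℝ (Fin n),
        (⨅ j : Fin (m + 1), ∑ i, x i * Gnew i j) ≤
          ⨅ j : Fin (m + 1), ∑ i, xplus i * Gnew i j) →
      ∑ i, xplus i * g i = Vnew := by
  intro xplus hxplus hopt
  haveI : Nonempty (Fin m) := Fin.pos_iff_nonempty.mp hm
  -- F x : value of x in the new game; split into old part and new column
  set Fold : (Fin n → ℝ) → ℝ := fun x => ⨅ j : Fin m, ∑ i, x i * G i j with hFold
  have hsplit : ∀ x : Fin n → ℝ,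
      (⨅ j : Fin (m + 1), ∑ i, x i * Gnew i j)
        = min (Fold x) (∑ i, x i * g i) := by
    intro x
    rw [aux_inf_split hm]
    congr 1
    · apply iInf_congr
      intro j
      exact Finset.sum_congr rfl fun i _ => by rw [(hGnew i).1 j]
    · exact Finset.sum_congr rfl fun i _ => by rw [(hGnew i).2]
  -- Vnew is the value at xplus
  haveI hne : Nonempty (stdSimplex ℝ (Fin n)) := ⟨⟨xplus, hxplus⟩⟩
  have hVnew_eq : Vnew = min (Fold xplus) (∑ i, xplus i * g i) := by
    rw [hVnew]
    apply le_antisymm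
    · apply ciSup_le
      intro x
      rw [← hsplit]
      exact hopt x x.2
    · have := le_ciSup (f := fun x : stdSimplex ℝ (Fin n) =>
        ⨅ j : Fin (m + 1), ∑ i, (x : Fin n → ℝ) i * Gnew i j)
        (by
          refine ⟨min (Fold xplus) (∑ i, xplus i * g i), ?_⟩
          rintro _ ⟨x, rfl⟩
          rw [← hsplit]
          exact hopt x x.2) ⟨xplus, hxplus⟩
      rw [hsplit] at this
      exact this
  -- main argument
  have hge : Vnew ≤ ∑ i, xplus i * g i := hVnew_eq ▸ min_le_right _ _
  by_contra hneq
  have hgt : Vnew < ∑ i, xplus i * g i := lt_of_le_of_ne hge (fun h => hneq h.symm)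
  have hVnewFold : Vnew = Fold xplus := by
    rcases min_cases (Fold xplus) (∑ i, xplus i * g i) with ⟨h1, h2⟩ | ⟨h1, h2⟩
    · rw [hVnew_eq, h1]
    · exfalso; rw [hVnew_eq, h1] at hgt; exact lt_irrefl _ hgt
  -- case xplus = xstar
  by_cases hx : xplus = xstar
  · subst hx
    have hfv : Fold xplus = V := by simp only [hFold]; exact hV.symm
    linarith
  -- case xplus ≠ xstar
  have hVlt : Vnew < V := by rw [hVnewFold]; exact huniq xplus hxplus hx
  -- choose ε
  set a : ℝ := ∑ i, xplus i * g i - Vnew with ha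
  set c : ℝ := |∑ i, xstar i * g i - ∑ i, xplus i * g i| with hc
  have hapos : 0 < a := by simp [ha]; linarith
  set ε : ℝ := min (1/2) (a / (2 * (c + 1))) with hε
  have hcpos : 0 < c + 1 := by positivity
  have hεpos : 0 < ε := lt_min (by norm_num) (by positivity)
  have hεle : ε ≤ 1 := (min_le_left _ _).trans (by norm_num)
  set x : Fin n → ℝ := fun i => (1 - ε) * xplus i + ε * xstar i with hxdef
  have hxmem : x ∈ stdSimplex ℝ (Fin n) := by
    have h := (convex_stdSimplex ℝ (Fin n)) hxplus hxstar (a := 1 - ε) (b := ε)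
      (by linarith) hεpos.le (by ring)
    convert h using 1
    ext i; simp only [hxdef, Pi.add_apply, Pi.smul_apply, smul_eq_mul]
  have hsum : ∀ (v : Fin n → ℝ), ∑ i, x i * v i
      = (1 - ε) * ∑ i, xplus i * v i + ε * ∑ i, xstar i * v i := by
    intro v
    rw [Finset.mul_sum, Finset.mul_sum, ← Finset.sum_add_distrib]
    exact Finset.sum_congr rfl fun i _ => by simp [hxdef]; ring
  -- old part of x beats Vnew
  have hFoldx : Vnew < Fold x := by
    have h1 : (1 - ε) * Vnew + ε * V ≤ Fold x := by
      apply le_ciInf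
      intro j
      have hp : Fold xplus ≤ ∑ i, xplus i * G i j :=
        ciInf_le (Set.Finite.bddBelow (Set.finite_range _)) j
      have hs : V ≤ ∑ i, xstar i * G i j := by
        rw [hV]; exact ciInf_le (Set.Finite.bddBelow (Set.finite_range _)) j
      have := hsum (fun i => G i j)
      rw [this]
      rw [hVnewFold]
      nlinarith [hεpos, hεle]
    nlinarith [hεpos, hεle]
  -- new column of x beats Vnew
  have hgx : Vnew < ∑ i, x i * g i := by
    rw [hsum g]
    have hεc : ε * c ≤ a / 2 := by
      have h2 : ε ≤ a / (2 * (c + 1)) := min_le_right _ _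
      have : ε * c ≤ (a / (2 * (c + 1))) * c := by
        apply mul_le_mul_of_nonneg_right h2 (abs_nonneg _)
      calc ε * c ≤ (a / (2 * (c + 1))) * c := this
        _ ≤ a / 2 := by
          rw [div_mul_eq_mul_div, div_le_div_iff₀ (by positivity) (by norm_num)]
          nlinarith [abs_nonneg (∑ i, xstar i * g i - ∑ i, xplus i * g i)]
    have habs : ε * (∑ i, xplus i * g i - ∑ i, xstar i * g i) ≤ a / 2 := by
      calc ε * (∑ i, xplus i * g i - ∑ i, xstar i * g i)
          ≤ ε * c := by
            apply mul_le_mul_of_nonneg_left _ hεpos.le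
            rw [hc, abs_sub_comm]
            exact le_abs_self _
        _ ≤ a / 2 := hεc
    nlinarith [habs, hgt, ha]
  -- contradiction with optimality of xplus
  have hcontra : (⨅ j : Fin (m + 1), ∑ i, x i * Gnew i j) ≤ Vnew := by
    have h := hopt x hxmem
    rw [hsplit xplus, ← hVnew_eq] at h
    exact h
  rw [hsplit x] at hcontra
  rcases min_cases (Fold x) (∑ i, x i * g i) with ⟨h1, _⟩ | ⟨h1, _⟩ <;>
    rw [h1] at hcontra <;> linarith
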